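/- arXiv:math/0609838 — 3 statements merged into one kernel-verified Lean document; each statement's English description precedes it below -/
import Mathlib

section
/- Let m ≥ 2 and n ≥ 1, let A : ℝⁿ → Matrix (Fin m) (Fin m) ℝ be a map (with each entry differentiable at p ∈ ℝⁿ) such that A(p) is symmetric, det(A(p)) = 0, and the Fréchet derivative at p of the map x ↦ det(A(x)) is nonzero. Then the kernel of A(p), viewed as a linear endomorphism of ℝᵐ, has dimension exactly 1 (equivalently, A(p) has rank m − 1). -/
open Matrix Module

/-- The determinant as a continuous multilinear map in the rows of the matrix. -/
noncomputable def detCM (m : ℕ) : ContinuousMultilinearMap ℝ (fun _ : Fin m => (Fin m → ℝ)) ℝ :=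
  { toMultilinearMap :=
      (Matrix.detRowAlternating : (Fin m → ℝ) [⋀^Fin m]→ₗ[ℝ] ℝ).toMultilinearMap
    cont := by
      show Continuous fun v : Fin m → Fin m → ℝ => Matrix.det (Matrix.of v)
      exact Continuous.matrix_det continuous_id }

/-- If the differential of `x ↦ det (A x)` at `p` is nonzero, then `A p` has rank at
least `m - 1`: otherwise every determinant obtained by replacing one row of `A p` would
vanish, hence so would the differential. -/
theorem key_rank_ge (m n : ℕ)
    (A : (Fin n → ℝ) → Matrix (Fin m) (Fin m) ℝ) (p : Fin n → ℝ)
    (hdiff : ∀ i j : Fin m, DifferentiableAt ℝ (fun x => A x i j) p)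
    (hd : fderiv ℝ (fun x => (A x).det) p ≠ 0) :
    m - 1 ≤ (A p).rank := by
  classical
  by_contra h
  push_neg at h
  apply hd
  -- each row of `A` is differentiable at `p`
  have hg : ∀ i : Fin m, HasFDerivAt (fun x => A x i)
      (fderiv ℝ (fun x => A x i) p) p := fun i =>
    (differentiableAt_pi.2 (hdiff i)).hasFDerivAt
  have hcomp : HasFDerivAt (fun x => (A x).det)
      (∑ i, ((detCM m).toContinuousLinearMap (fun j => A p j) i) ∘L
        (fderiv ℝ (fun x => A x i) p)) p :=
    HasFDerivAt.multilinear_comp (detCM m) hg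
  rw [hcomp.fderiv]
  -- every determinant obtained by replacing one row of `A p` vanishes
  have hzero : ∀ (i : Fin m) (w : Fin m → ℝ),
      (detCM m) (Function.update (fun j => A p j) i w) = 0 := by
    intro i w
    apply AlternatingMap.map_linearDependent
    intro hli
    have hli' : LinearIndependent ℝ (fun j : {j : Fin m // j ≠ i} => A p j) := by
      have := hli.comp (Subtype.val : {j : Fin m // j ≠ i} → Fin m) Subtype.val_injective
      convert this using 1
      funext j
      simp [Function.update_of_ne j.2]
      all_goals rfl
    have hcard : Fintype.card {j : Fin m // j ≠ i} = m - 1 := by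
      simp [Fintype.card_subtype_compl]
    have hfin := linearIndependent_iff_card_eq_finrank_span.mp hli'
    rw [hcard] at hfin
    have hle : Submodule.span ℝ (Set.range fun j : {j : Fin m // j ≠ i} => A p j) ≤
        Submodule.span ℝ (Set.range (A p)) := by
      apply Submodule.span_mono
      rintro _ ⟨j, rfl⟩
      exact ⟨j, rfl⟩
    have := Submodule.finrank_mono hle
    rw [← Set.finrank, ← hfin, ← show (A p).row = A p from rfl, ← Matrix.rank_eq_finrank_span_row] at this
    omega
  ext v
  simp only [ContinuousLinearMap.coe_sum', Finset.sum_apply,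
    ContinuousLinearMap.comp_apply, ContinuousLinearMap.zero_apply]
  apply Finset.sum_eq_zero
  intro i _
  have : ∀ w, ((detCM m).toContinuousLinearMap (fun j => A p j) i) w = 0 := by
    intro w
    simpa [ContinuousMultilinearMap.toContinuousLinearMap] using hzero i w
  exact this _

/-- Coordinate expression of the fact that a transverse type-changing symmetric
(0,2)-tensor has a one-dimensional radical at every degenerate point: if `A p` is a
symmetric real `m × m` matrix with `det (A p) = 0` and the differential of
`x ↦ det (A x)` at `p` is nonzero, then `ker (A p)` is one-dimensional
(equivalently, `A p` has rank `m - 1`). -/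
theorem radical_one_dimensional_of_transverse
    (m n : ℕ) (hm : 2 ≤ m) (hn : 1 ≤ n)
    (A : (Fin n → ℝ) → Matrix (Fin m) (Fin m) ℝ) (p : Fin n → ℝ)
    (hdiff : ∀ i j : Fin m, DifferentiableAt ℝ (fun x => A x i j) p)
    (hsymm : (A p).IsSymm)
    (hdet : (A p).det = 0)
    (hd : fderiv ℝ (fun x => (A x).det) p ≠ 0) :
    Module.finrank ℝ (LinearMap.ker (Matrix.toLin' (A p))) = 1 ∧
      (A p).rank = m - 1 := by
  classical
  have hkey : m - 1 ≤ (A p).rank := key_rank_ge m n A p hdiff hd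
  set M := A p with hM
  have htl : Matrix.toLin' M = M.mulVecLin := by
    apply LinearMap.ext; intro v
    rw [Matrix.toLin'_apply, Matrix.mulVecLin_apply]
  have hrn := LinearMap.finrank_range_add_finrank_ker M.mulVecLin
  have hdom : finrank ℝ (Fin m → ℝ) = m := by simp
  rw [hdom] at hrn
  have hk : finrank ℝ (LinearMap.ker M.mulVecLin) ≠ 0 := by
    intro h0
    have hbot : LinearMap.ker M.mulVecLin = ⊥ := Submodule.finrank_eq_zero.mp h0
    obtain ⟨v, hv, hmv⟩ := (Matrix.exists_mulVec_eq_zero_iff).mpr hdet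
    exact hv (by simpa [hbot] using (LinearMap.mem_ker.mpr (by simpa using hmv) :
      v ∈ LinearMap.ker M.mulVecLin))
  have hrank : M.rank = finrank ℝ (LinearMap.range M.mulVecLin) := rfl
  rw [htl]
  constructor <;> omega
end

section
/- Let m ≥ 2 and n ≥ 1, and let A, B, C : ℝⁿ → Matrix (Fin m) (Fin m) ℝ be maps whose entries are differentiable at p ∈ ℝⁿ, such that C(p) is invertible, det(B(p)) = 0, and A(x) = (C(x))ᵀ · B(x) · C(x) for all x. Then the Fréchet derivative at p of x ↦ det(A(x)) is nonzero if and only if the Fréchet derivative at p of x ↦ det(B(x)) is nonzero. -/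
open Matrix

lemma det_diff_at {m n : ℕ} (B : (Fin n → ℝ) → Matrix (Fin m) (Fin m) ℝ) (p : Fin n → ℝ)
    (hB : ∀ i j : Fin m, DifferentiableAt ℝ (fun x => B x i j) p) :
    DifferentiableAt ℝ (fun x => (B x).det) p := by
  simp only [Matrix.det_apply']
  apply DifferentiableAt.fun_sum
  intro σ _
  exact ((HasFDerivAt.finset_prod fun i _ =>
    (hB (σ i) i).hasFDerivAt).differentiableAt).const_mul _

/-- Coordinate-independence of the transversality condition `d_p(det(g_ab)) ≠ 0`:
if `A x = (C x)ᵀ * B x * C x` with `C p` invertible and `det (B p) = 0`, and all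
entries are differentiable at `p`, then the differential at `p` of `x ↦ det (A x)`
is nonzero iff the differential at `p` of `x ↦ det (B x)` is. -/
theorem transversality_coordinate_independent
    (m n : ℕ) (hm : 2 ≤ m) (hn : 1 ≤ n)
    (A B C : (Fin n → ℝ) → Matrix (Fin m) (Fin m) ℝ) (p : Fin n → ℝ)
    (hA : ∀ i j : Fin m, DifferentiableAt ℝ (fun x => A x i j) p)
    (hB : ∀ i j : Fin m, DifferentiableAt ℝ (fun x => B x i j) p)
    (hC : ∀ i j : Fin m, DifferentiableAt ℝ (fun x => C x i j) p)
    (hCinv : IsUnit (C p))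
    (hdetB : (B p).det = 0)
    (hABC : ∀ x, A x = (C x)ᵀ * B x * C x) :
    fderiv ℝ (fun x => (A x).det) p ≠ 0 ↔ fderiv ℝ (fun x => (B x).det) p ≠ 0 := by
  have hdB : DifferentiableAt ℝ (fun x => (B x).det) p := det_diff_at B p hB
  have hdC : DifferentiableAt ℝ (fun x => (C x).det) p := det_diff_at C p hC
  have hdC2 : DifferentiableAt ℝ (fun x => (C x).det * (C x).det) p := hdC.mul hdC
  have hfun : (fun x => (A x).det) = fun x => ((C x).det * (C x).det) * (B x).det := by
    funext x
    rw [hABC x]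
    simp [Matrix.det_mul, Matrix.det_transpose]
    ring
  have hkey : fderiv ℝ (fun x => (A x).det) p
      = ((C p).det * (C p).det) • fderiv ℝ (fun x => (B x).det) p := by
    rw [hfun, fderiv_fun_mul hdC2 hdB, hdetB]
    simp
  have hc : (C p).det ≠ 0 := by
    intro h
    have := ((Matrix.isUnit_iff_isUnit_det (C p)).mp hCinv)
    rw [h] at this
    exact not_isUnit_zero this
  rw [hkey]
  constructor
  · intro h h0; rw [h0] at h; simp at h
  · intro h h0
    apply h
    have := smul_eq_zero.mp h0
    rcases this with h1 | h1
    · exact absurd h1 (mul_ne_zero hc hc)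
    · exact h1
end

section
/- Let m ≥ 2 and let A : ℝ → Matrix (Fin m) (Fin m) ℝ be a map with continuously differentiable entries such that A(t) is symmetric for every t, det(A(0)) = 0, and the derivative at 0 of the function t ↦ det(A(t)) is nonzero. Then there exists ε > 0 such that for all t with 0 < t < ε the matrices A(t) and A(−t) are invertible and the number of negative eigenvalues of A(t) (counted with multiplicity) differs from the number of negative eigenvalues of A(−t) by exactly one. -/
open Matrix Finset
open scoped RealInnerProductSpace

variable {m : ℕ}

/-- products of differentiable functions are differentiable -/
lemma aux_diff_prod {ι : Type*} (u : Finset ι) (f : ι → ℝ → ℝ)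
    (hf : ∀ i ∈ u, Differentiable ℝ (f i)) :
    Differentiable ℝ fun t => ∏ i ∈ u, f i t := by
  classical
  induction u using Finset.cons_induction with
  | empty => simpa using differentiable_const 1
  | cons a s ha ih =>
      simp only [Finset.prod_cons]
      exact (hf a (Finset.mem_cons_self a s)).mul
        (ih fun i hi => hf i (Finset.mem_cons_of_mem hi))

lemma aux_norm_sq (x : EuclideanSpace ℝ (Fin m)) : ‖x‖ ^ 2 = ∑ i, x i ^ 2 := by
  rw [EuclideanSpace.norm_eq, Real.sq_sqrt (by positivity)]
  simp [Real.norm_eq_abs, sq_abs]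

lemma aux_abs_le_norm (x : EuclideanSpace ℝ (Fin m)) (i : Fin m) : |x i| ≤ ‖x‖ := by
  have h1 : (x i) ^ 2 ≤ ‖x‖ ^ 2 := by
    rw [aux_norm_sq]
    exact Finset.single_le_sum (f := fun j => x j ^ 2) (fun j _ => sq_nonneg _) (mem_univ i)
  exact abs_le_of_sq_le_sq h1 (norm_nonneg x)

lemma aux_quad_formula {M : Matrix (Fin m) (Fin m) ℝ} (hM : M.IsHermitian)
    (x : EuclideanSpace ℝ (Fin m)) :
    ⟪x, Matrix.toEuclideanLin M x⟫ =
      ∑ i, hM.eigenvalues i * hM.eigenvectorBasis.repr x i ^ 2 := by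
  classical
  set v := hM.eigenvectorBasis with hv
  have hvy : ∀ j : Fin m, Matrix.toEuclideanLin M (v j) = hM.eigenvalues j • v j := by
    intro j
    apply (WithLp.equiv 2 _).injective
    ext i
    have := congrFun (hM.mulVec_eigenvectorBasis j) i
    simpa using this
  have hexp : Matrix.toEuclideanLin M x
      = ∑ j, (v.repr x j * hM.eigenvalues j) • v j := by
    conv_lhs => rw [← v.sum_repr x]
    rw [map_sum]
    congr 1
    funext j
    rw [_root_.map_smul, hvy j, smul_smul]
  rw [hexp]
  conv_lhs => rw [← v.sum_repr x]
  rw [sum_inner]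
  simp only [real_inner_smul_left, inner_sum, real_inner_smul_right]
  have horth := v.orthonormal
  rw [orthonormal_iff_ite] at horth
  simp only [horth, mul_ite, mul_one, mul_zero]
  rw [Finset.sum_comm]
  refine Finset.sum_congr rfl fun j _ => ?_
  rw [Finset.sum_ite_eq' Finset.univ j]
  simp only [Finset.mem_univ, if_true]
  rw [v.sum_repr x]
  ring

lemma aux_finrank_le_card (W : Submodule ℝ (EuclideanSpace ℝ (Fin m)))
    (b : OrthonormalBasis (Fin m) ℝ (EuclideanSpace ℝ (Fin m))) (S : Finset (Fin m))
    (h : ∀ x ∈ W, (∀ i ∈ S, b.repr x i = 0) → x = 0) :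
    Module.finrank ℝ W ≤ S.card := by
  classical
  let φ : W →ₗ[ℝ] (S → ℝ) :=
    { toFun := fun w i => b.repr w.1 i.1
      map_add' := by intro w₁ w₂; funext i; simp
      map_smul' := by intro c w; funext i; simp }
  have hinj : Function.Injective φ := by
    rw [← LinearMap.ker_eq_bot, LinearMap.ker_eq_bot']
    intro w hw
    have : (w : EuclideanSpace ℝ (Fin m)) = 0 := by
      refine h w.1 w.2 fun i hi => ?_
      exact congrFun hw ⟨i, hi⟩
    exact Subtype.ext this
  have := LinearMap.finrank_le_finrank_of_injective hinj
  simpa [Module.finrank_pi] using this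

lemma aux_sylvester_neg {M : Matrix (Fin m) (Fin m) ℝ} (hM : M.IsHermitian)
    (W : Submodule ℝ (EuclideanSpace ℝ (Fin m)))
    (hW : ∀ x ∈ W, x ≠ 0 → ⟪x, Matrix.toEuclideanLin M x⟫ < 0) :
    Module.finrank ℝ W ≤ (Finset.univ.filter fun i => hM.eigenvalues i < 0).card := by
  classical
  refine aux_finrank_le_card W hM.eigenvectorBasis _ fun x hxW hrep => ?_
  by_contra hx
  have hQ := hW x hxW hx
  rw [aux_quad_formula hM x] at hQ
  have : (0:ℝ) ≤ ∑ i, hM.eigenvalues i * hM.eigenvectorBasis.repr x i ^ 2 := by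
    refine Finset.sum_nonneg fun i _ => ?_
    by_cases hi : hM.eigenvalues i < 0
    · rw [hrep i (by simp [hi])]; simp
    · exact mul_nonneg (not_lt.1 hi) (sq_nonneg _)
  linarith

lemma aux_sylvester_pos {M : Matrix (Fin m) (Fin m) ℝ} (hM : M.IsHermitian)
    (W : Submodule ℝ (EuclideanSpace ℝ (Fin m)))
    (hW : ∀ x ∈ W, x ≠ 0 → 0 < ⟪x, Matrix.toEuclideanLin M x⟫) :
    Module.finrank ℝ W ≤ (Finset.univ.filter fun i => 0 < hM.eigenvalues i).card := by
  classical
  refine aux_finrank_le_card W hM.eigenvectorBasis _ fun x hxW hrep => ?_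
  by_contra hx
  have hQ := hW x hxW hx
  rw [aux_quad_formula hM x] at hQ
  have : ∑ i, hM.eigenvalues i * hM.eigenvectorBasis.repr x i ^ 2 ≤ 0 := by
    refine Finset.sum_nonpos fun i _ => ?_
    by_cases hi : 0 < hM.eigenvalues i
    · rw [hrep i (by simp [hi])]; simp
    · exact mul_nonpos_of_nonpos_of_nonneg (not_lt.1 hi) (sq_nonneg _)
  linarith

lemma aux_quad_bound (M : Matrix (Fin m) (Fin m) ℝ) (x : EuclideanSpace ℝ (Fin m)) :
    |⟪x, Matrix.toEuclideanLin M x⟫| ≤ (∑ i, ∑ j, |M i j|) * ‖x‖ ^ 2 := by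
  classical
  have hinner : ⟪x, Matrix.toEuclideanLin M x⟫ = ∑ i, ∑ j, x i * (M i j * x j) := by
    rw [PiLp.inner_apply]
    refine Finset.sum_congr rfl fun i _ => ?_
    have : (Matrix.toEuclideanLin M x) i = ∑ j, M i j * x j := rfl
    rw [this, RCLike.inner_apply]
    simp [Finset.mul_sum, mul_comm]
  rw [hinner, Finset.sum_mul]
  refine (Finset.abs_sum_le_sum_abs _ _).trans (Finset.sum_le_sum fun i _ => ?_)
  rw [Finset.sum_mul]
  refine (Finset.abs_sum_le_sum_abs _ _).trans (Finset.sum_le_sum fun j _ => ?_)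
  rw [abs_mul, abs_mul]
  calc |x i| * (|M i j| * |x j|) = |M i j| * (|x i| * |x j|) := by ring
  _ ≤ |M i j| * (‖x‖ * ‖x‖) := by
      refine mul_le_mul_of_nonneg_left ?_ (abs_nonneg _)
      exact mul_le_mul (aux_abs_le_norm x i) (aux_abs_le_norm x j) (abs_nonneg _) (norm_nonneg _)
  _ = |M i j| * ‖x‖ ^ 2 := by ring

lemma aux_prod_sign (g : Fin m → ℝ) (hg : ∀ i, g i ≠ 0) :
    0 < (-1 : ℝ) ^ (Finset.univ.filter fun i => g i < 0).card * ∏ i, g i := by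
  classical
  have hsplit : ∀ i, g i = (if g i < 0 then (-1:ℝ) else 1) * |g i| := by
    intro i
    by_cases hi : g i < 0
    · simp [hi, abs_of_neg hi]
    · simp [hi, abs_of_nonneg (not_lt.1 hi)]
  have h1 : ∏ i, g i =
      (-1 : ℝ) ^ (Finset.univ.filter fun i => g i < 0).card * ∏ i, |g i| := by
    calc ∏ i, g i = ∏ i, (if g i < 0 then (-1:ℝ) else 1) * |g i| :=
          Finset.prod_congr rfl fun i _ => hsplit i
    _ = (∏ i, (if g i < 0 then (-1:ℝ) else 1)) * ∏ i, |g i| := Finset.prod_mul_distrib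
    _ = (-1 : ℝ) ^ (Finset.univ.filter fun i => g i < 0).card * ∏ i, |g i| := by
        rw [Finset.prod_ite, Finset.prod_const, Finset.prod_const, one_pow, mul_one]
  rw [h1, ← mul_assoc, ← pow_add, ← two_mul, pow_mul, neg_one_sq, one_pow, one_mul]
  exact Finset.prod_pos fun i _ => abs_pos.2 (hg i)

lemma aux_card_split (lam : Fin m → ℝ) (hne : ∀ i, lam i ≠ 0) :
    (Finset.univ.filter fun i => lam i < 0).card
      + (Finset.univ.filter fun i => 0 < lam i).card = m := by
  classical
  have h := Finset.card_filter_add_card_filter_not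
    (s := (Finset.univ : Finset (Fin m))) (p := fun i => lam i < 0)
  rw [Finset.card_univ, Fintype.card_fin] at h
  have heq : (Finset.univ.filter fun i => ¬ lam i < 0)
      = Finset.univ.filter fun i => 0 < lam i := by
    refine Finset.filter_congr fun i _ => ?_
    constructor
    · intro hi; exact lt_of_le_of_ne (not_lt.1 hi) (Ne.symm (hne i))
    · intro hi; exact not_lt.2 hi.le
  rw [heq] at h
  exact h

lemma aux_card_split_zero (lam : Fin m → ℝ) (i₀ : Fin m) (hz : lam i₀ = 0)
    (huniq : ∀ j, lam j = 0 → j = i₀) :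
    (Finset.univ.filter fun i => lam i < 0).card + 1
      + (Finset.univ.filter fun i => 0 < lam i).card = m := by
  classical
  have h := Finset.card_filter_add_card_filter_not
    (s := (Finset.univ : Finset (Fin m))) (p := fun i => lam i < 0)
  rw [Finset.card_univ, Fintype.card_fin] at h
  have heq : (Finset.univ.filter fun i => ¬ lam i < 0)
      = insert i₀ (Finset.univ.filter fun i => 0 < lam i) := by
    ext i
    simp only [Finset.mem_filter, Finset.mem_univ, true_and, Finset.mem_insert, not_lt]
    constructor
    · intro hi
      rcases hi.lt_or_eq with h' | h'
      · exact Or.inr h'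
      · exact Or.inl (huniq i h'.symm)
    · rintro (rfl | hi)
      · exact hz.ge
      · exact hi.le
  rw [heq, Finset.card_insert_of_notMem (by simp [hz])] at h
  omega

lemma aux_sign_flip {f : ℝ → ℝ} {d : ℝ} (hf0 : f 0 = 0) (hd : HasDerivAt f d 0)
    (hdne : d ≠ 0) : ∃ ε > (0:ℝ), ∀ t, 0 < t → t < ε → f t * f (-t) < 0 := by
  have hslope := hasDerivAt_iff_tendsto_slope.1 hd
  have habs : ∀ᶠ s in nhdsWithin 0 {(0:ℝ)}ᶜ, |slope f 0 s - d| < |d| := by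
    have : {y : ℝ | |y - d| < |d|} ∈ nhds d := by
      have : Metric.ball d |d| ∈ nhds d := Metric.ball_mem_nhds d (abs_pos.2 hdne)
      simpa [Metric.ball, Real.dist_eq] using this
    exact hslope this
  rw [eventually_nhdsWithin_iff, Metric.eventually_nhds_iff] at habs
  obtain ⟨ε, hε, hball⟩ := habs
  refine ⟨ε, hε, fun t ht htε => ?_⟩
  have htne : t ≠ 0 := ne_of_gt ht
  have h1 : |slope f 0 t - d| < |d| := by
    refine hball (by simpa [Real.dist_eq, abs_of_pos ht] using htε) ?_
    simpa using htne
  have h2 : |slope f 0 (-t) - d| < |d| := by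
    refine hball (by simpa [Real.dist_eq, abs_of_pos ht] using htε) ?_
    simpa using htne
  have hs1 : slope f 0 t = f t / t := by
    simp [slope_def_field, hf0]
  have hs2 : slope f 0 (-t) = f (-t) / (-t) := by
    simp [slope_def_field, hf0]
  rw [hs1] at h1
  rw [hs2] at h2
  have ha : (f t / t) * d > 0 := by
    rcases abs_lt.1 h1 with ⟨hl, hr⟩
    rcases lt_or_gt_of_ne hdne with hdneg | hdpos
    · nlinarith [abs_of_neg hdneg]
    · nlinarith [abs_of_pos hdpos]
  have hb : (f (-t) / (-t)) * d > 0 := by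
    rcases abs_lt.1 h2 with ⟨hl, hr⟩
    rcases lt_or_gt_of_ne hdne with hdneg | hdpos
    · nlinarith [abs_of_neg hdneg]
    · nlinarith [abs_of_pos hdpos]
  have hprod : (f t / t) * (f (-t) / (-t)) > 0 := by
    nlinarith [sq_nonneg d, mul_pos ha hb]
  have key : f t * f (-t) = -(((f t / t) * (f (-t) / (-t))) * t ^ 2) := by
    field_simp
  rw [key]
  have ht2 : (0:ℝ) < t ^ 2 := by positivity
  nlinarith [hprod, ht2]

lemma aux_det_differentiable (B : ℝ → Matrix (Fin m) (Fin m) ℝ)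
    (hBd : ∀ i j, Differentiable ℝ fun t => B t i j) :
    Differentiable ℝ fun t => (B t).det := by
  classical
  have hrw : (fun t => (B t).det)
      = fun t => ∑ σ : Equiv.Perm (Fin m),
          ((Equiv.Perm.sign σ : ℤ) : ℝ) * ∏ i, B t (σ i) i := by
    funext t; rw [Matrix.det_apply']
  rw [hrw]
  refine Differentiable.fun_sum fun σ _ => Differentiable.const_mul ?_ _
  exact aux_diff_prod Finset.univ _ fun i _ => hBd (σ i) i

lemma aux_unique_zero_eigenvalue (A : ℝ → Matrix (Fin m) (Fin m) ℝ)
    (hAd : ∀ i j, Differentiable ℝ fun t => A t i j)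
    (hB : (A 0).IsHermitian)
    (hd : deriv (fun t => (A t).det) 0 ≠ 0) :
    ∀ i j, hB.eigenvalues i = 0 → hB.eigenvalues j = 0 → i = j := by
  classical
  intro i j hi hj
  by_contra hij
  set U : Matrix (Fin m) (Fin m) ℝ := (hB.eigenvectorUnitary : Matrix (Fin m) (Fin m) ℝ) with hU
  set D : ℝ → Matrix (Fin m) (Fin m) ℝ := fun t => star U * A t * U with hD
  have hUU : star U * U = 1 := (Matrix.mem_unitaryGroup_iff').mp hB.eigenvectorUnitary.2
  have hdetD : ∀ t, (D t).det = (A t).det := by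
    intro t
    have h1 : (D t).det = (star U).det * (A t).det * U.det := by
      rw [hD]; simp [Matrix.det_mul]
    have h2 : (star U).det * U.det = 1 := by
      rw [← Matrix.det_mul, hUU, Matrix.det_one]
    calc (D t).det = (star U).det * U.det * (A t).det := by rw [h1]; ring
    _ = (A t).det := by rw [h2, one_mul]
  have hD0 : D 0 = Matrix.diagonal hB.eigenvalues := by
    rw [hD]
    have := hB.conjStarAlgAut_star_eigenvectorUnitary
    simpa [Unitary.conjStarAlgAut_star_apply] using this
  have hrowi : ∀ l, D 0 i l = 0 := by
    intro l
    rw [hD0, Matrix.diagonal_apply]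
    split
    · exact hi
    · rfl
  have hrowj : ∀ l, D 0 j l = 0 := by
    intro l
    rw [hD0, Matrix.diagonal_apply]
    split
    · exact hj
    · rfl
  have hDd : ∀ r l, Differentiable ℝ fun t => D t r l := by
    intro r l
    have : (fun t => D t r l) = fun t => ∑ b, (∑ a, (star U) r a * A t a b) * U b l := by
      funext t; rw [hD]; simp [Matrix.mul_apply]
    rw [this]
    exact Differentiable.fun_sum fun b _ => Differentiable.mul_const
      (Differentiable.fun_sum fun a _ => (hAd a b).const_mul _) _
  -- the slope of det ∘ D tends to 0
  have hkey : Filter.Tendsto (fun t => (D t).det / t) (nhdsWithin 0 {(0:ℝ)}ᶜ) (nhds 0) := by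
    have hrw : (fun t => (D t).det / t)
        = fun t => ∑ σ : Equiv.Perm (Fin m),
            (((Equiv.Perm.sign σ : ℤ) : ℝ) * ∏ l, D t (σ l) l) / t := by
      funext t; rw [Matrix.det_apply', Finset.sum_div]
    rw [hrw]
    have h0 : (0:ℝ) = ∑ _σ : Equiv.Perm (Fin m), 0 := by simp
    rw [h0]
    refine tendsto_finset_sum _ fun σ _ => ?_
    -- pick out the factor at a = σ⁻¹ i
    set a : Fin m := σ⁻¹ i with ha
    set b : Fin m := σ⁻¹ j with hb
    have hab : a ≠ b := fun h => hij (σ.symm.injective h)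
    have hσa : σ a = i := Equiv.apply_symm_apply σ i
    have hσb : σ b = j := Equiv.apply_symm_apply σ j
    have hsplit : ∀ t, (((Equiv.Perm.sign σ : ℤ) : ℝ) * ∏ l, D t (σ l) l) / t
        = ((Equiv.Perm.sign σ : ℤ) : ℝ) * ((D t (σ a) a / t) * ∏ l ∈ Finset.univ.erase a, D t (σ l) l) := by
      intro t
      rw [← Finset.mul_prod_erase Finset.univ _ (Finset.mem_univ a)]
      ring
    simp only [hsplit]
    have h1 : Filter.Tendsto (fun t => D t (σ a) a / t) (nhdsWithin 0 {(0:ℝ)}ᶜ)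
        (nhds (deriv (fun t => D t (σ a) a) 0)) := by
      have hder := ((hDd (σ a) a) 0).hasDerivAt
      have := hasDerivAt_iff_tendsto_slope.1 hder
      have hsl : slope (fun t => D t (σ a) a) 0 = fun t => D t (σ a) a / t := by
        funext t
        rw [slope_def_field]
        have hz : D 0 (σ a) a = 0 := by
          rw [hσa]; exact hrowi a
        rw [hz]
        simp
      rwa [hsl] at this
    have h2 : Filter.Tendsto (fun t => ∏ l ∈ Finset.univ.erase a, D t (σ l) l)
        (nhdsWithin 0 {(0:ℝ)}ᶜ) (nhds 0) := by
      have hcont : Filter.Tendsto (fun t => ∏ l ∈ Finset.univ.erase a, D t (σ l) l)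
          (nhds 0) (nhds (∏ l ∈ Finset.univ.erase a, D 0 (σ l) l)) := by
        refine tendsto_finset_prod _ fun l _ => ?_
        exact ((hDd (σ l) l).continuous.tendsto 0)
      have hzero : ∏ l ∈ Finset.univ.erase a, D 0 (σ l) l = 0 := by
        refine Finset.prod_eq_zero (Finset.mem_erase.2 ⟨Ne.symm hab, Finset.mem_univ b⟩) ?_
        rw [hσb]; exact hrowj b
      rw [hzero] at hcont
      exact hcont.mono_left nhdsWithin_le_nhds
    have := (h1.mul h2).const_mul (((Equiv.Perm.sign σ : ℤ) : ℝ))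
    simpa using this
  -- conclude deriv = 0
  have hfd0 : (A 0).det = 0 := by
    rw [← hdetD 0, hD0, Matrix.det_diagonal]
    exact Finset.prod_eq_zero (Finset.mem_univ i) hi
  have hslopeA : Filter.Tendsto (slope (fun t => (A t).det) 0) (nhdsWithin 0 {(0:ℝ)}ᶜ) (nhds 0) := by
    have hsl : slope (fun t => (A t).det) 0 = fun t => (D t).det / t := by
      funext t
      rw [slope_def_field, hfd0, hdetD t]
      simp
    rw [hsl]
    exact hkey
  have : HasDerivAt (fun t => (A t).det) 0 0 := hasDerivAt_iff_tendsto_slope.2 hslopeA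
  exact hd this.deriv

lemma aux_span_repr_vanish (b : OrthonormalBasis (Fin m) ℝ (EuclideanSpace ℝ (Fin m)))
    (p : Fin m → Prop) [DecidablePred p] (x : EuclideanSpace ℝ (Fin m))
    (hx : x ∈ Submodule.span ℝ (Set.range fun i : {i // p i} => b i.1))
    (l : Fin m) (hl : ¬ p l) : b.repr x l = 0 := by
  classical
  induction hx using Submodule.span_induction with
  | mem y hy =>
      obtain ⟨i, rfl⟩ := hy
      rw [b.repr_self]
      have : l ≠ i.1 := fun h => hl (h ▸ i.2)
      simp [EuclideanSpace.single_apply, this]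
  | zero => simp
  | add y z hy hz hy' hz' => rw [map_add]; simp [hy', hz']
  | smul a y hy hy' => rw [_root_.map_smul]; simp [hy']

lemma aux_span_finrank (b : OrthonormalBasis (Fin m) ℝ (EuclideanSpace ℝ (Fin m)))
    (p : Fin m → Prop) [DecidablePred p] :
    Module.finrank ℝ (Submodule.span ℝ (Set.range fun i : {i // p i} => b i.1))
      = (Finset.univ.filter p).card := by
  classical
  have h := finrank_span_eq_card (R := ℝ)
    ((b.orthonormal.comp (Subtype.val : {i // p i} → Fin m) Subtype.val_injective).linearIndependent)
  rw [Fintype.card_subtype] at h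
  exact h


/-- Matrix form of "the transverse type-changing hypersurface separates two
pseudo-Riemannian regions whose indices differ in one unit": if `A : ℝ → Sym(m,ℝ)`
is a C¹ family of symmetric matrices with `det (A 0) = 0` and `(d/dt) det (A t)`
nonzero at `t = 0`, then for all small `t > 0` the matrices `A t` and `A (-t)` are
invertible and their numbers of negative eigenvalues (with multiplicity) differ by
exactly one.  (Over `ℝ`, `IsHermitian` means precisely that the matrix is
symmetric.) -/
theorem index_jumps_by_one_across_transverse_degeneracy
    (m : ℕ) (hm : 2 ≤ m)
    (A : ℝ → Matrix (Fin m) (Fin m) ℝ)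
    (hC1 : ∀ i j : Fin m, ContDiff ℝ 1 fun t => A t i j)
    (hsymm : ∀ t, (A t).IsHermitian)
    (hdet0 : (A 0).det = 0)
    (hd : deriv (fun t => (A t).det) 0 ≠ 0) :
    ∃ ε > (0 : ℝ), ∀ t : ℝ, 0 < t → t < ε →
      IsUnit (A t) ∧ IsUnit (A (-t)) ∧
        (Fintype.card {i : Fin m // (hsymm t).eigenvalues i < 0} =
            Fintype.card {i : Fin m // (hsymm (-t)).eigenvalues i < 0} + 1 ∨
          Fintype.card {i : Fin m // (hsymm (-t)).eigenvalues i < 0} =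
            Fintype.card {i : Fin m // (hsymm t).eigenvalues i < 0} + 1) := by
  classical
  have hAd : ∀ i j : Fin m, Differentiable ℝ fun t => A t i j :=
    fun i j => (hC1 i j).differentiable one_ne_zero
  have hdet_eig : ∀ t : ℝ, (A t).det = ∏ i, (hsymm t).eigenvalues i := by
    intro t
    exact_mod_cast (hsymm t).det_eq_prod_eigenvalues
  -- a zero eigenvalue of A 0
  have hprod0 : ∏ i, (hsymm 0).eigenvalues i = 0 := by
    rw [← hdet_eig 0]; exact hdet0
  obtain ⟨i₀, -, hi₀⟩ := Finset.prod_eq_zero_iff.1 hprod0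
  have huniq : ∀ j, (hsymm 0).eigenvalues j = 0 → j = i₀ :=
    fun j hj => aux_unique_zero_eigenvalue A hAd (hsymm 0) hd j i₀ hj hi₀
  have hkpm : (Finset.univ.filter fun i => (hsymm 0).eigenvalues i < 0).card + 1
      + (Finset.univ.filter fun i => 0 < (hsymm 0).eigenvalues i).card = m :=
    aux_card_split_zero _ i₀ hi₀ huniq
  set k := (Finset.univ.filter fun i => (hsymm 0).eigenvalues i < 0).card with hkdef
  set p := (Finset.univ.filter fun i => 0 < (hsymm 0).eigenvalues i).card with hpdef
  set v := (hsymm 0).eigenvectorBasis with hvdef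
  -- subspaces
  set Wneg := Submodule.span ℝ
    (Set.range fun i : {i // (hsymm 0).eigenvalues i < 0} => v i.1) with hWnegdef
  set Wpos := Submodule.span ℝ
    (Set.range fun i : {i // 0 < (hsymm 0).eigenvalues i} => v i.1) with hWposdef
  have hWnegrank : Module.finrank ℝ Wneg = k := aux_span_finrank v _
  have hWposrank : Module.finrank ℝ Wpos = p := aux_span_finrank v _
  -- a uniform gap constant
  have hnefin : Nonempty (Fin m) := ⟨⟨0, by omega⟩⟩
  set g : Fin m → ℝ := fun i => if (hsymm 0).eigenvalues i < 0 then -(hsymm 0).eigenvalues i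
    else if 0 < (hsymm 0).eigenvalues i then (hsymm 0).eigenvalues i else 1 with hgdef
  have hgpos : ∀ i, 0 < g i := by
    intro i
    rw [hgdef]
    dsimp only
    split
    · next h => linarith
    · split
      · next h => exact h
      · exact one_pos
  set c := Finset.univ.inf' Finset.univ_nonempty g with hcdef
  have hcpos : 0 < c := by
    rw [hcdef, Finset.lt_inf'_iff]
    exact fun i _ => hgpos i
  have hcle : ∀ i, c ≤ g i := fun i => Finset.inf'_le g (Finset.mem_univ i)
  -- sum of squares of coordinates is the norm squared
  have hnormsum : ∀ x : EuclideanSpace ℝ (Fin m), ∑ i, (v.repr x i)^2 = ‖x‖^2 := by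
    intro x
    rw [← aux_norm_sq (v.repr x), v.repr.norm_map]
  -- quadratic form estimates at t = 0
  have hQ0neg : ∀ x ∈ Wneg, ⟪x, Matrix.toEuclideanLin (A 0) x⟫ ≤ -c * ‖x‖^2 := by
    intro x hx
    rw [aux_quad_formula (hsymm 0) x]
    have hterm : ∀ i ∈ Finset.univ, (hsymm 0).eigenvalues i * ((hsymm 0).eigenvectorBasis.repr x i)^2
        ≤ -c * ((hsymm 0).eigenvectorBasis.repr x i)^2 := by
      intro i _
      by_cases hi : (hsymm 0).eigenvalues i < 0
      · have hgi := hcle i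
        rw [hgdef] at hgi
        simp only [if_pos hi] at hgi
        have : (hsymm 0).eigenvalues i ≤ -c := by linarith
        exact mul_le_mul_of_nonneg_right this (sq_nonneg _)
      · rw [aux_span_repr_vanish v _ x hx i hi]
        simp
    calc ∑ i, (hsymm 0).eigenvalues i * ((hsymm 0).eigenvectorBasis.repr x i)^2
        ≤ ∑ i, -c * ((hsymm 0).eigenvectorBasis.repr x i)^2 := Finset.sum_le_sum hterm
    _ = -c * ∑ i, ((hsymm 0).eigenvectorBasis.repr x i)^2 := by rw [Finset.mul_sum]
    _ = -c * ‖x‖^2 := by rw [← hvdef, hnormsum]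
  have hQ0pos : ∀ x ∈ Wpos, c * ‖x‖^2 ≤ ⟪x, Matrix.toEuclideanLin (A 0) x⟫ := by
    intro x hx
    rw [aux_quad_formula (hsymm 0) x]
    have hterm : ∀ i ∈ Finset.univ, c * ((hsymm 0).eigenvectorBasis.repr x i)^2
        ≤ (hsymm 0).eigenvalues i * ((hsymm 0).eigenvectorBasis.repr x i)^2 := by
      intro i _
      by_cases hi : 0 < (hsymm 0).eigenvalues i
      · have hgi := hcle i
        rw [hgdef] at hgi
        have hnlt : ¬ (hsymm 0).eigenvalues i < 0 := by linarith
        simp only [if_neg hnlt, if_pos hi] at hgi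
        exact mul_le_mul_of_nonneg_right hgi (sq_nonneg _)
      · rw [aux_span_repr_vanish v _ x hx i hi]
        simp
    calc c * ‖x‖^2 = c * ∑ i, ((hsymm 0).eigenvectorBasis.repr x i)^2 := by rw [← hvdef, hnormsum]
    _ = ∑ i, c * ((hsymm 0).eigenvectorBasis.repr x i)^2 := by rw [Finset.mul_sum]
    _ ≤ _ := Finset.sum_le_sum hterm
  -- perturbation control
  set s : ℝ → ℝ := fun t => ∑ i, ∑ j, |A t i j - A 0 i j| with hsdef
  have hscont : Continuous s := by
    refine continuous_finset_sum _ fun i _ => continuous_finset_sum _ fun j _ => ?_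
    exact ((hAd i j).continuous.sub continuous_const).abs
  have hs0 : s 0 = 0 := by simp [hsdef]
  have hev : ∀ᶠ t in nhds (0:ℝ), s t < c := by
    have h := hscont.tendsto 0
    rw [hs0] at h
    exact h.eventually_lt_const hcpos
  rw [Metric.eventually_nhds_iff] at hev
  obtain ⟨δ₁, hδ₁pos, hδ₁⟩ := hev
  have hQadd : ∀ (t : ℝ) (x : EuclideanSpace ℝ (Fin m)),
      ⟪x, Matrix.toEuclideanLin (A t) x⟫
        = ⟪x, Matrix.toEuclideanLin (A 0) x⟫ + ⟪x, Matrix.toEuclideanLin (A t - A 0) x⟫ := by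
    intro t x
    have h1 : Matrix.toEuclideanLin (A t - A 0)
        = Matrix.toEuclideanLin (A t) - Matrix.toEuclideanLin (A 0) :=
      map_sub Matrix.toEuclideanLin _ _
    rw [h1, LinearMap.sub_apply, inner_sub_right]
    ring
  have hQbd : ∀ (t : ℝ) (x : EuclideanSpace ℝ (Fin m)),
      |⟪x, Matrix.toEuclideanLin (A t - A 0) x⟫| ≤ s t * ‖x‖^2 := by
    intro t x
    have h := aux_quad_bound (A t - A 0) x
    have hsum_eq : (∑ i, ∑ j, |(A t - A 0) i j|) = s t := by
      rw [hsdef]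
      refine Finset.sum_congr rfl fun i _ => Finset.sum_congr rfl fun j _ => ?_
      rw [Matrix.sub_apply]
    rwa [hsum_eq] at h
  have hQneg : ∀ t : ℝ, |t| < δ₁ → ∀ x ∈ Wneg, x ≠ 0 →
      ⟪x, Matrix.toEuclideanLin (A t) x⟫ < 0 := by
    intro t ht x hx hx0
    have hst : s t < c := hδ₁ (by simpa [Real.dist_eq] using ht)
    have hx2 : 0 < ‖x‖^2 := pow_pos (norm_pos_iff.2 hx0) 2
    have h0 := hQ0neg x hx
    have habs := (abs_le.1 (hQbd t x)).2
    have hadd := hQadd t x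
    nlinarith [mul_pos (sub_pos.2 hst) hx2]
  have hQpos : ∀ t : ℝ, |t| < δ₁ → ∀ x ∈ Wpos, x ≠ 0 →
      0 < ⟪x, Matrix.toEuclideanLin (A t) x⟫ := by
    intro t ht x hx hx0
    have hst : s t < c := hδ₁ (by simpa [Real.dist_eq] using ht)
    have hx2 : 0 < ‖x‖^2 := pow_pos (norm_pos_iff.2 hx0) 2
    have h0 := hQ0pos x hx
    have habs := (abs_le.1 (hQbd t x)).1
    have hadd := hQadd t x
    nlinarith [mul_pos (sub_pos.2 hst) hx2]
  -- sign flip of the determinant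
  have hder : HasDerivAt (fun t => (A t).det) (deriv (fun t => (A t).det) 0) 0 :=
    ((aux_det_differentiable A hAd) 0).hasDerivAt
  obtain ⟨ε₂, hε₂pos, hflip⟩ := aux_sign_flip hdet0 hder hd
  refine ⟨min δ₁ ε₂, lt_min hδ₁pos hε₂pos, fun t ht htε => ?_⟩
  have htδ : |t| < δ₁ := by
    rw [abs_of_pos ht]; exact lt_of_lt_of_le htε (min_le_left _ _)
  have htδ' : |(-t)| < δ₁ := by rwa [abs_neg]
  have hsign : (A t).det * (A (-t)).det < 0 :=
    hflip t ht (lt_of_lt_of_le htε (min_le_right _ _))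
  have hft : (A t).det ≠ 0 := by
    intro h; rw [h, zero_mul] at hsign; exact lt_irrefl 0 hsign
  have hfmt : (A (-t)).det ≠ 0 := by
    intro h; rw [h, mul_zero] at hsign; exact lt_irrefl 0 hsign
  have hut : IsUnit (A t) := (Matrix.isUnit_iff_isUnit_det _).2 (isUnit_iff_ne_zero.2 hft)
  have humt : IsUnit (A (-t)) := (Matrix.isUnit_iff_isUnit_det _).2 (isUnit_iff_ne_zero.2 hfmt)
  refine ⟨hut, humt, ?_⟩
  -- eigenvalues nonzero
  have hlamne : ∀ (u : ℝ), (A u).det ≠ 0 → ∀ i, (hsymm u).eigenvalues i ≠ 0 := by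
    intro u hu i hzero
    exact hu ((hdet_eig u).trans (Finset.prod_eq_zero (Finset.mem_univ i) hzero))
  -- counting for a fixed small u
  have hcount : ∀ (u : ℝ), |u| < δ₁ → (A u).det ≠ 0 →
      k ≤ (Finset.univ.filter fun i => (hsymm u).eigenvalues i < 0).card ∧
      (Finset.univ.filter fun i => (hsymm u).eigenvalues i < 0).card ≤ k + 1 := by
    intro u hu hdu
    have h1 : k ≤ (Finset.univ.filter fun i => (hsymm u).eigenvalues i < 0).card := by
      rw [← hWnegrank]
      exact aux_sylvester_neg (hsymm u) Wneg (hQneg u hu)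
    have h2 : p ≤ (Finset.univ.filter fun i => 0 < (hsymm u).eigenvalues i).card := by
      rw [← hWposrank]
      exact aux_sylvester_pos (hsymm u) Wpos (hQpos u hu)
    have h3 := aux_card_split (hsymm u).eigenvalues (hlamne u hdu)
    omega
  obtain ⟨hnt1, hnt2⟩ := hcount t htδ hft
  obtain ⟨hmt1, hmt2⟩ := hcount (-t) htδ' hfmt
  -- parity via determinant signs
  have hsg1 := aux_prod_sign (hsymm t).eigenvalues (hlamne t hft)
  have hsg2 := aux_prod_sign (hsymm (-t)).eigenvalues (hlamne (-t) hfmt)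
  rw [← hdet_eig t] at hsg1
  rw [← hdet_eig (-t)] at hsg2
  set nt := (Finset.univ.filter fun i => (hsymm t).eigenvalues i < 0).card with hntdef
  set nmt := (Finset.univ.filter fun i => (hsymm (-t)).eigenvalues i < 0).card with hnmtdef
  have hneq : nt ≠ nmt := by
    intro h
    rw [h] at hsg1
    have hsq : ((-1:ℝ)^nmt) * ((-1:ℝ)^nmt) = 1 := by
      rw [← pow_add, ← two_mul, pow_mul, neg_one_sq, one_pow]
    nlinarith [mul_pos hsg1 hsg2]
  have hct : Fintype.card {i : Fin m // (hsymm t).eigenvalues i < 0} = nt := by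
    rw [Fintype.card_subtype]
  have hcmt : Fintype.card {i : Fin m // (hsymm (-t)).eigenvalues i < 0} = nmt := by
    rw [Fintype.card_subtype]
  rw [hct, hcmt]
  omega
end
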